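/- Let d ≥ 2 and λ > 1, and let W be the d-ary generalized randomized response channel W(y|x) = λ/(λ+d−1) if y = x and 1/(λ+d−1) if y ≠ x. Then for every pair of inputs a ≠ b: (i) the likelihood ratio w(y) = W(y|b)/W(y|a) takes only the values λ^{-1} (at y = a), λ (at y = b), and 1 (elsewhere); (ii) under the law W(·|a), the pushforward of w has mass λ/(λ+d−1) at λ^{-1}, mass (d−2)/(λ+d−1) at 1, and mass 1/(λ+d−1) at λ; and (iii) χ²(W(·|b) ‖ W(·|a)) = (λ−1)²(λ+1)/(λ(λ+d−1)). In particular, as d → ∞, the pushforward laws converge weakly to δ₁ and the χ² divergence tends to 0, so GRR is diluting. -/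

import Mathlib

open Finset BigOperators MeasureTheory Filter Topology
open scoped Classical

/-- The `d`-ary generalized randomized response channel with parameter `λ`. -/
noncomputable def grr (d : ℕ) (lam : ℝ) (x y : Fin d) : ℝ :=
  if y = x then lam / (lam + d - 1) else 1 / (lam + d - 1)

lemma grr_c_pos (d : ℕ) {lam : ℝ} (hlam : 1 < lam) : 0 < lam + d - 1 := by
  have : (0:ℝ) ≤ d := Nat.cast_nonneg d
  linarith

lemma grr_ratio (d : ℕ) {lam : ℝ} (hlam : 1 < lam) {a b : Fin d} (hab : a ≠ b) (y : Fin d) :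
    grr d lam b y / grr d lam a y = if y = a then lam⁻¹ else if y = b then lam else 1 := by
  have hc : 0 < lam + d - 1 := grr_c_pos d hlam
  have hl : (0:ℝ) < lam := by linarith
  by_cases hya : y = a <;> by_cases hyb : y = b
  · exact absurd (hya ▸ hyb) hab
  · simp only [grr, hya, if_pos rfl, if_neg (fun h : a = b => hab h), ↓reduceIte]
    field_simp
  · simp only [grr, hyb, if_pos rfl, if_neg (fun h : b = a => hab h.symm), ↓reduceIte]
    field_simp
  · simp only [grr, if_neg hya, if_neg hyb, if_neg hya, if_neg hyb]
    field_simp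

lemma grr_filters (d : ℕ) {lam : ℝ} (hlam : 1 < lam) {a b : Fin d} (hab : a ≠ b) :
    (Finset.univ.filter (fun y => grr d lam b y / grr d lam a y = lam⁻¹) = {a})
    ∧ (Finset.univ.filter (fun y => grr d lam b y / grr d lam a y = lam) = {b})
    ∧ (Finset.univ.filter (fun y => grr d lam b y / grr d lam a y = 1)
        = Finset.univ.filter (fun y => y ≠ a ∧ y ≠ b)) := by
  have hl : (0:ℝ) < lam := by linarith
  have h1 : lam⁻¹ < 1 := by rw [inv_lt_one_iff₀]; right; exact hlam
  have h2 : lam⁻¹ ≠ lam := by intro h; nlinarith [inv_pos.mpr hl]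
  have h3 : lam⁻¹ ≠ 1 := ne_of_lt h1
  have h4 : (1:ℝ) ≠ lam := ne_of_lt hlam
  refine ⟨?_, ?_, ?_⟩
  · ext y
    simp only [Finset.mem_filter, Finset.mem_univ, true_and, Finset.mem_singleton,
      grr_ratio d hlam hab y]
    split_ifs with hya hyb
    · exact iff_of_true rfl hya
    · exact iff_of_false (fun h => h2 h.symm) hya
    · exact iff_of_false (fun h => h3 h.symm) hya
  · ext y
    simp only [Finset.mem_filter, Finset.mem_univ, true_and, Finset.mem_singleton,
      grr_ratio d hlam hab y]
    split_ifs with hya hyb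
    · exact iff_of_false h2 (fun h => hab (hya ▸ h))
    · exact iff_of_true rfl hyb
    · exact iff_of_false (fun h => h4 h) hyb
  · ext y
    simp only [Finset.mem_filter, Finset.mem_univ, true_and,
      grr_ratio d hlam hab y]
    split_ifs with hya hyb
    · exact iff_of_false h3 (fun h => h.1 hya)
    · exact iff_of_false (fun h => h4 h.symm) (fun h => h.2 hyb)
    · exact iff_of_true rfl ⟨hya, hyb⟩

lemma grr_main (d : ℕ) {lam : ℝ} (hlam : 1 < lam) (hd : 2 ≤ d) {a b : Fin d} (hab : a ≠ b) :
    ((∀ y, grr d lam b y / grr d lam a y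
        = if y = a then lam⁻¹ else if y = b then lam else 1)
      ∧ (∑ y ∈ Finset.univ.filter (fun y => grr d lam b y / grr d lam a y = lam⁻¹),
            grr d lam a y = lam / (lam + d - 1))
      ∧ (∑ y ∈ Finset.univ.filter (fun y => grr d lam b y / grr d lam a y = 1),
            grr d lam a y = ((d : ℝ) - 2) / (lam + d - 1))
      ∧ (∑ y ∈ Finset.univ.filter (fun y => grr d lam b y / grr d lam a y = lam),
            grr d lam a y = 1 / (lam + d - 1))
      ∧ (∑ y, (grr d lam b y - grr d lam a y) ^ 2 / grr d lam a y
          = (lam - 1) ^ 2 * (lam + 1) / (lam * (lam + d - 1)))) := by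
  have hc : 0 < lam + d - 1 := grr_c_pos d hlam
  have hl : (0:ℝ) < lam := by linarith
  obtain ⟨hf1, hf2, hf3⟩ := grr_filters d hlam hab
  refine ⟨grr_ratio d hlam hab, ?_, ?_, ?_, ?_⟩
  · rw [hf1]; simp [grr]
  · rw [hf3]
    have hcard : (Finset.univ.filter (fun y : Fin d => y ≠ a ∧ y ≠ b)).card = d - 2 := by
      have : Finset.univ.filter (fun y : Fin d => y ≠ a ∧ y ≠ b)
          = Finset.univ \ {a, b} := by
        ext y; simp [and_comm]
      rw [this, Finset.card_sdiff_of_subset (by simp)]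
      simp [Finset.card_insert_of_notMem, hab]
    have hval : ∀ y ∈ Finset.univ.filter (fun y : Fin d => y ≠ a ∧ y ≠ b),
        grr d lam a y = 1 / (lam + d - 1) := by
      intro y hy
      simp only [Finset.mem_filter] at hy
      simp [grr, hy.2.1]
    rw [Finset.sum_congr rfl hval, Finset.sum_const, hcard, nsmul_eq_mul]
    have : ((d - 2 : ℕ) : ℝ) = (d : ℝ) - 2 := by
      have := Nat.cast_sub hd (R := ℝ); simpa using this
    rw [this]; ring
  · rw [hf2]
    have : grr d lam a b = 1 / (lam + d - 1) := by
      rw [grr, if_neg (fun h : b = a => hab h.symm)]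
    simpa using this
  · have key : ∀ y : Fin d, (grr d lam b y - grr d lam a y) ^ 2 / grr d lam a y
        = (if y = a then (lam - 1) ^ 2 / (lam * (lam + d - 1)) else 0)
          + (if y = b then (lam - 1) ^ 2 / (lam + d - 1) else 0) := by
      intro y
      by_cases hya : y = a <;> by_cases hyb : y = b
      · exact absurd (hya ▸ hyb) hab
      · simp only [grr, hya, if_pos rfl, if_neg (fun h : a = b => hab h), if_neg hyb, ↓reduceIte]
        field_simp; ring
      · simp only [grr, hyb, if_pos rfl, if_neg (fun h : b = a => hab h.symm), if_neg hya, ↓reduceIte]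
        field_simp; ring
      · simp only [grr, if_neg hya, if_neg hyb]
        field_simp; ring
    rw [Finset.sum_congr rfl (fun y _ => key y), Finset.sum_add_distrib,
      Finset.sum_ite_eq' Finset.univ a, Finset.sum_ite_eq' Finset.univ b]
    simp only [Finset.mem_univ, if_pos]
    field_simp; ring

lemma tendsto_aux {lam : ℝ} (hlam : 1 < lam) (K : ℝ) :
    Tendsto (fun k : ℕ => K / (lam + (k + 2 : ℕ) - 1)) atTop (nhds 0) := by
  have h : Tendsto (fun k : ℕ => (lam + (k + 2 : ℕ) - 1 : ℝ)) atTop atTop := by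
    apply tendsto_atTop_add_const_right
    apply tendsto_atTop_add_const_left
    exact tendsto_natCast_atTop_atTop.comp (tendsto_add_atTop_nat 2)
  simpa [div_eq_mul_inv] using (tendsto_inv_atTop_zero.comp h).const_mul K

lemma integral_sum_dirac {d : ℕ} (c r : Fin d → ℝ) (hc : ∀ y, 0 ≤ c y)
    (f : BoundedContinuousFunction ℝ ℝ) :
    ∫ x, f x ∂(∑ y : Fin d, ENNReal.ofReal (c y) • Measure.dirac (r y))
      = ∑ y : Fin d, c y * f (r y) := by
  rw [integral_finset_sum_measure (fun y _ =>
    (f.integrable (Measure.dirac (r y))).smul_measure ENNReal.ofReal_ne_top)]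
  refine Finset.sum_congr rfl fun y _ => ?_
  rw [integral_smul_measure, integral_dirac, ENNReal.toReal_ofReal (hc y), smul_eq_mul]

lemma grr_weight_sum (d : ℕ) {lam : ℝ} (hlam : 1 < lam) {a b : Fin d} (hab : a ≠ b)
    (g : ℝ → ℝ) :
    ∑ y : Fin d, grr d lam a y * g (grr d lam b y / grr d lam a y)
      = (lam * g lam⁻¹ + g lam + ((d : ℝ) - 2) * g 1) / (lam + d - 1) := by
  have hc : 0 < lam + d - 1 := grr_c_pos d hlam
  have hba : b ≠ a := fun h => hab h.symm
  have key : ∀ y : Fin d, grr d lam a y * g (grr d lam b y / grr d lam a y)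
      = (if y = a then lam / (lam + d - 1) * g lam⁻¹ - 1 / (lam + d - 1) * g 1 else 0)
        + (if y = b then 1 / (lam + d - 1) * g lam - 1 / (lam + d - 1) * g 1 else 0)
        + 1 / (lam + d - 1) * g 1 := by
    intro y
    rw [grr_ratio d hlam hab y]
    by_cases hya : y = a <;> by_cases hyb : y = b
    · exact absurd (hya ▸ hyb) hab
    · simp [grr, hya, hyb, hab, hba]
    · simp [grr, hya, hyb, hab, hba]
    · simp [grr, hya, hyb]
  rw [Finset.sum_congr rfl (fun y _ => key y)]
  simp only [Finset.sum_add_distrib, Finset.sum_ite_eq' Finset.univ a,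
    Finset.sum_ite_eq' Finset.univ b, Finset.mem_univ, if_pos, Finset.sum_const,
    Finset.card_univ, Fintype.card_fin, nsmul_eq_mul]
  field_simp
  ring

/-- **The GRR pole** (Proposition 7.1).  For `d`-ary GRR and every pair `a ≠ b`:
(i) the likelihood ratio takes only the values `λ⁻¹` (at `y = a`), `λ` (at `y = b`)
and `1` (elsewhere); (ii) its pushforward under `W(·|a)` has masses `λ/(λ+d−1)`,
`(d−2)/(λ+d−1)`, `1/(λ+d−1)` at `λ⁻¹`, `1`, `λ`; (iii) the chi-square divergence is
`(λ−1)²(λ+1)/(λ(λ+d−1))`.  In particular, as `d → ∞` (written `d = k+2`), the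
likelihood-ratio laws converge weakly to `δ₁` and the chi-square divergence tends
to `0`: GRR is diluting. -/
theorem grr_pole (lam : ℝ) (hlam : 1 < lam) :
    (∀ d : ℕ, 2 ≤ d → ∀ a b : Fin d, a ≠ b →
      ((∀ y, grr d lam b y / grr d lam a y
          = if y = a then lam⁻¹ else if y = b then lam else 1)
        ∧ (∑ y ∈ Finset.univ.filter (fun y => grr d lam b y / grr d lam a y = lam⁻¹),
              grr d lam a y = lam / (lam + d - 1))
        ∧ (∑ y ∈ Finset.univ.filter (fun y => grr d lam b y / grr d lam a y = 1),
              grr d lam a y = ((d : ℝ) - 2) / (lam + d - 1))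
        ∧ (∑ y ∈ Finset.univ.filter (fun y => grr d lam b y / grr d lam a y = lam),
              grr d lam a y = 1 / (lam + d - 1))
        ∧ (∑ y, (grr d lam b y - grr d lam a y) ^ 2 / grr d lam a y
            = (lam - 1) ^ 2 * (lam + 1) / (lam * (lam + d - 1)))))
    ∧ (∀ (a b : (k : ℕ) → Fin (k + 2)), (∀ k, a k ≠ b k) →
        (∀ f : BoundedContinuousFunction ℝ ℝ,
          Tendsto (fun k => ∫ x, f x ∂(∑ y : Fin (k + 2),
              ENNReal.ofReal (grr (k + 2) lam (a k) y) •
                Measure.dirac (grr (k + 2) lam (b k) y / grr (k + 2) lam (a k) y)))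
            atTop (nhds (f 1)))
        ∧ Tendsto (fun k => ∑ y : Fin (k + 2),
            (grr (k + 2) lam (b k) y - grr (k + 2) lam (a k) y) ^ 2 / grr (k + 2) lam (a k) y)
            atTop (nhds 0)) := by
  have hl : (0:ℝ) < lam := by linarith
  constructor
  · intro d hd a b hab
    exact grr_main d hlam hd hab
  · intro a b hab
    constructor
    · intro f
      have heq : ∀ k : ℕ, (∫ x, f x ∂(∑ y : Fin (k + 2),
          ENNReal.ofReal (grr (k + 2) lam (a k) y) •
            Measure.dirac (grr (k + 2) lam (b k) y / grr (k + 2) lam (a k) y)))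
          = f 1 + (lam * f lam⁻¹ + f lam - (lam + 1) * f 1) / (lam + ((k + 2 : ℕ) : ℝ) - 1) := by
        intro k
        have hc : 0 < lam + ((k + 2 : ℕ) : ℝ) - 1 := grr_c_pos (k + 2) hlam
        have hnn : ∀ y : Fin (k + 2), 0 ≤ grr (k + 2) lam (a k) y := by
          intro y
          unfold grr
          split_ifs <;> positivity
        rw [integral_sum_dirac _ _ hnn f, grr_weight_sum (k + 2) hlam (hab k) f,
          add_div' _ _ _ (ne_of_gt hc)]
        congr 1
        ring
      simp only [heq]
      simpa using tendsto_const_nhds.add (tendsto_aux hlam (lam * f lam⁻¹ + f lam - (lam + 1) * f 1))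
    · have heq : ∀ k : ℕ, (∑ y : Fin (k + 2),
          (grr (k + 2) lam (b k) y - grr (k + 2) lam (a k) y) ^ 2 / grr (k + 2) lam (a k) y)
          = ((lam - 1) ^ 2 * (lam + 1) / lam) / (lam + ((k + 2 : ℕ) : ℝ) - 1) := by
        intro k
        have hc : 0 < lam + ((k + 2 : ℕ) : ℝ) - 1 := grr_c_pos (k + 2) hlam
        rw [(grr_main (k + 2) hlam (by omega) (hab k)).2.2.2.2]
        field_simp
      simp only [heq]
      exact tendsto_aux hlam _
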